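/- arXiv:2002.05004 — 2 statements merged into one kernel-verified Lean document; each statement's English description precedes it below -/
import Mathlib

section
/- Let λ ∈ ℝ^n be nonzero with λ_1 ≥ λ_2 ≥ … ≥ λ_n ≥ 0, let τ > 0 and b ∈ ℝ^n. Then the function φ(y) = ½‖Π_C(yλ + b)‖² − yτ − ½‖b‖² attains its minimum over ℝ at exactly one point; that is, there exists a unique y* ∈ ℝ such that φ(y*) ≤ φ(y) for all y ∈ ℝ. -/
open Matrix

/-- The matrix `B` with `(Bx)_i = x_i − x_{i+1}` for `1 ≤ i ≤ n−1` and `(Bx)_n = x_n`. -/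
def Bmat (n : ℕ) : Matrix (Fin n) (Fin n) ℝ :=
  Matrix.of fun i j => if j = i then 1 else if (j : ℕ) = (i : ℕ) + 1 then -1 else 0

/-- `B_Γ`, the submatrix of `B` formed by the rows indexed by `Γ`. -/
def subRows {n : ℕ} (Γ : Finset (Fin n)) : Matrix {i // i ∈ Γ} (Fin n) ℝ :=
  Matrix.of fun i j => Bmat n i.1 j

/-- `H = I_n − B_Γᵀ (B_Γ B_Γᵀ)⁻¹ B_Γ`, the orthogonal projection onto the null space of
`B_Γ` (equal to `I_n` when `Γ = ∅`). -/
noncomputable def Hmat {n : ℕ} (Γ : Finset (Fin n)) : Matrix (Fin n) (Fin n) ℝ :=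
  1 - (subRows Γ)ᵀ * (subRows Γ * (subRows Γ)ᵀ)⁻¹ * subRows Γ

/-- The monotone nonnegative cone `C = {x : x₁ ≥ x₂ ≥ … ≥ xₙ ≥ 0}`. -/
def coneC (n : ℕ) : Set (Fin n → ℝ) :=
  {x | (∀ i j : Fin n, i ≤ j → x j ≤ x i) ∧ ∀ i, 0 ≤ x i}

/-- `Pc` is the Euclidean (metric) projection onto the cone `C`:
`Pc d` minimizes `½‖x − d‖²` over `x ∈ C`. -/
def IsProjC {n : ℕ} (Pc : (Fin n → ℝ) → Fin n → ℝ) : Prop :=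
  ∀ d : Fin n → ℝ, Pc d ∈ coneC n ∧
    ∀ x ∈ coneC n, (1/2) * ∑ i, (Pc d i - d i)^2 ≤ (1/2) * ∑ i, (x i - d i)^2

/-- `z(d) = (Bᵀ)⁻¹(d − Π_C(d))`. -/
noncomputable def zdual {n : ℕ} (Pc : (Fin n → ℝ) → Fin n → ℝ) (d : Fin n → ℝ) :
    Fin n → ℝ :=
  Matrix.mulVec ((Bmat n)ᵀ)⁻¹ (d - Pc d)

/-- `K(d) = {Γ : Supp(z(d)) ⊆ Γ ⊆ I(Π_C(d))}`. -/
def Kset {n : ℕ} (Pc : (Fin n → ℝ) → Fin n → ℝ) (d : Fin n → ℝ) :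
    Set (Finset (Fin n)) :=
  {Γ | (∀ i, zdual Pc d i ≠ 0 → i ∈ Γ) ∧ ∀ i ∈ Γ, (Bmat n).mulVec (Pc d) i = 0}

/-- `H(d) = {I_n − B_Γᵀ(B_Γ B_Γᵀ)⁻¹ B_Γ : Γ ∈ K(d)}`, the HS-Jacobian of `Π_C` at `d`. -/
def Hset {n : ℕ} (Pc : (Fin n → ℝ) → Fin n → ℝ) (d : Fin n → ℝ) :
    Set (Matrix (Fin n) (Fin n) ℝ) :=
  {H | ∃ Γ ∈ Kset Pc d, H = Hmat Γ}

/-- `M(y) = {λᵀHλ : H ∈ H(yλ + b)}`. -/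
def Mset {n : ℕ} (Pc : (Fin n → ℝ) → Fin n → ℝ) (lam b : Fin n → ℝ) (y : ℝ) : Set ℝ :=
  {m | ∃ H ∈ Hset Pc (y • lam + b), m = dotProduct lam (H.mulVec lam)}

/-- The dual objective `φ(y) = ½‖Π_C(yλ + b)‖² − yτ − ½‖b‖²`. -/
noncomputable def phiFun {n : ℕ} (Pc : (Fin n → ℝ) → Fin n → ℝ) (lam b : Fin n → ℝ)
    (τ : ℝ) : ℝ → ℝ :=
  fun y => (1/2) * ∑ i, (Pc (y • lam + b) i)^2 - y * τ - (1/2) * ∑ i, (b i)^2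

/-- `ψ(y) = ⟨Π_C(yλ + b), λ⟩ − τ` (the derivative `φ′` of the dual objective). -/
noncomputable def psiFun {n : ℕ} (Pc : (Fin n → ℝ) → Fin n → ℝ) (lam b : Fin n → ℝ)
    (τ : ℝ) : ℝ → ℝ :=
  fun y => (∑ i, Pc (y • lam + b) i * lam i) - τ

/-- The Euclidean norm on `ℝⁿ`. -/
noncomputable def enorm {n : ℕ} (x : Fin n → ℝ) : ℝ :=
  Real.sqrt (∑ i, (x i)^2)

lemma my_sum_expand {n : ℕ} (x d : Fin n → ℝ) :
    ∑ i, (x i - d i)^2 = (∑ i, (x i)^2) - 2*(∑ i, x i * d i) + ∑ i, (d i)^2 := by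
  have h : ∀ i : Fin n, (x i - d i)^2 = (x i)^2 - 2*(x i * d i) + (d i)^2 := fun i => by ring
  rw [Finset.sum_congr rfl (fun i _ => h i), Finset.sum_add_distrib, Finset.sum_sub_distrib,
    ← Finset.mul_sum]

lemma coneC_zero {n : ℕ} : (0 : Fin n → ℝ) ∈ coneC n := by
  constructor <;> simp

lemma coneC_smul {n : ℕ} {t : ℝ} (ht : 0 ≤ t) {x : Fin n → ℝ} (hx : x ∈ coneC n) :
    (fun i => t * x i) ∈ coneC n :=
  ⟨fun i j h => mul_le_mul_of_nonneg_left (hx.1 i j h) ht, fun i => mul_nonneg ht (hx.2 i)⟩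

lemma coneC_mid {n : ℕ} {x p : Fin n → ℝ} (hx : x ∈ coneC n) (hp : p ∈ coneC n) :
    (fun i => (x i + p i)/2) ∈ coneC n := by
  refine ⟨fun i j h => ?_, fun i => ?_⟩
  · have h1 := hx.1 i j h; have h2 := hp.1 i j h; dsimp only; linarith
  · have h1 := hx.2 i; have h2 := hp.2 i; dsimp only; linarith

lemma proj_orth {n : ℕ} {Pc : (Fin n → ℝ) → Fin n → ℝ} (hPc : IsProjC Pc) (d : Fin n → ℝ) :
    ∑ i, (Pc d i)^2 = ∑ i, Pc d i * d i := by
  obtain ⟨hC, hmin⟩ := hPc d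
  set p := Pc d with hp
  set S := ∑ i, (p i)^2 with hS
  set P := ∑ i, p i * d i with hP
  have key : ∀ t : ℝ, 0 ≤ t → S - 2*P ≤ t^2*S - 2*(t*P) := by
    intro t ht
    have h := hmin _ (coneC_smul ht hC)
    rw [my_sum_expand, my_sum_expand] at h
    have e1 : ∑ i, (t * p i)^2 = t^2 * S := by
      rw [hS, Finset.mul_sum]; exact Finset.sum_congr rfl (fun i _ => by ring)
    have e2 : ∑ i, (t * p i) * d i = t * P := by
      rw [hP, Finset.mul_sum]; exact Finset.sum_congr rfl (fun i _ => by ring)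
    rw [e1, e2] at h
    linarith
  by_cases hS0 : S = 0
  · have hz : ∀ i, p i = 0 := by
      intro i
      have hS0' : ∑ i, (p i)^2 = 0 := hS ▸ hS0
      have h2 := (Finset.sum_eq_zero_iff_of_nonneg (fun j _ => sq_nonneg (p j))).mp hS0'
      have := h2 i (Finset.mem_univ i)
      exact pow_eq_zero_iff (two_ne_zero) |>.mp this
    have hP0 : P = 0 := by rw [hP]; exact Finset.sum_eq_zero (fun i _ => by rw [hz i]; ring)
    rw [hS0, hP0]
  · have hSpos : 0 < S := lt_of_le_of_ne (Finset.sum_nonneg (fun i _ => sq_nonneg _)) (Ne.symm hS0)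
    have h0 : S - 2*P ≤ 0 := by have := key 0 le_rfl; simpa using this
    have hPpos : 0 ≤ P := by linarith
    have hk := key (P/S) (by positivity)
    have e1 : (P/S)^2*S - 2*((P/S)*P) = -(P^2)/S := by field_simp; ring
    rw [e1] at hk
    have h2 : (S - 2*P)*S ≤ -(P^2) := (le_div_iff₀ hSpos).mp hk
    have h3 : (S - P)^2 ≤ 0 := by nlinarith
    nlinarith [sq_nonneg (S - P)]

lemma proj_max {n : ℕ} {Pc : (Fin n → ℝ) → Fin n → ℝ} (hPc : IsProjC Pc) (d : Fin n → ℝ)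
    {x : Fin n → ℝ} (hx : x ∈ coneC n) :
    (∑ i, x i * d i) - (1/2)*(∑ i, (x i)^2) ≤ (1/2) * ∑ i, (Pc d i)^2 := by
  have h := (hPc d).2 x hx
  rw [my_sum_expand, my_sum_expand] at h
  have ho := proj_orth hPc d
  linarith

lemma proj_max_eq {n : ℕ} {Pc : (Fin n → ℝ) → Fin n → ℝ} (hPc : IsProjC Pc) (d : Fin n → ℝ)
    {x : Fin n → ℝ} (hx : x ∈ coneC n)
    (heq : (∑ i, x i * d i) - (1/2)*(∑ i, (x i)^2) = (1/2) * ∑ i, (Pc d i)^2) :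
    x = Pc d := by
  obtain ⟨hC, hmin⟩ := hPc d
  set p := Pc d with hp
  have ho := proj_orth hPc d
  -- ∑ (x−d)² = ∑ (p−d)²
  have hA : ∑ i, (x i - d i)^2 = ∑ i, (p i - d i)^2 := by
    rw [my_sum_expand, my_sum_expand]; linarith
  have hz := hmin _ (coneC_mid hx hC)
  have hpar : ∑ i, ((x i + p i)/2 - d i)^2 =
      (1/2)*(∑ i, (x i - d i)^2) + (1/2)*(∑ i, (p i - d i)^2) - (1/4)*(∑ i, (x i - p i)^2) := by
    have h : ∀ i : Fin n, ((x i + p i)/2 - d i)^2 =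
        (1/2)*(x i - d i)^2 + (1/2)*(p i - d i)^2 - (1/4)*(x i - p i)^2 := fun i => by ring
    rw [Finset.sum_congr rfl (fun i _ => h i), Finset.sum_sub_distrib, Finset.sum_add_distrib,
      ← Finset.mul_sum, ← Finset.mul_sum, ← Finset.mul_sum]
  rw [hpar, hA] at hz
  have hE : ∑ i, (x i - p i)^2 ≤ 0 := by linarith
  have hE0 : ∑ i, (x i - p i)^2 = 0 :=
    le_antisymm hE (Finset.sum_nonneg (fun i _ => sq_nonneg _))
  funext i
  have := (Finset.sum_eq_zero_iff_of_nonneg (fun j _ => sq_nonneg (x j - p j))).mp hE0 i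
    (Finset.mem_univ i)
  have := pow_eq_zero_iff (two_ne_zero) |>.mp this
  linarith [sub_eq_zero.mp this]

/-- the dual objective `φ(y) = ½‖Π_C(yλ + b)‖² − yτ − ½‖b‖²` attains its
minimum over `ℝ` at exactly one point. -/
theorem stmt15 {n : ℕ} (hn : 0 < n) (lam : Fin n → ℝ)
    (hmono : ∀ i j : Fin n, i ≤ j → lam j ≤ lam i)
    (hnonneg : ∀ i, 0 ≤ lam i) (hlam : lam ≠ 0)
    (τ : ℝ) (hτ : 0 < τ) (b : Fin n → ℝ)
    (Pc : (Fin n → ℝ) → Fin n → ℝ) (hPc : IsProjC Pc) :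
    ∃! ystar : ℝ, ∀ y : ℝ, phiFun Pc lam b τ ystar ≤ phiFun Pc lam b τ y := by
  classical
  set φ := phiFun Pc lam b τ with hφdef
  set c : ℝ := (1/2) * ∑ i, (b i)^2 with hc
  -- sums against d y
  have hsum_d : ∀ (y : ℝ) (x : Fin n → ℝ),
      ∑ i, x i * (y • lam + b) i = y * (∑ i, x i * lam i) + ∑ i, x i * b i := by
    intro y x
    have h : ∀ i : Fin n, x i * (y • lam + b) i = y * (x i * lam i) + x i * b i := by
      intro i; simp [Pi.add_apply, Pi.smul_apply, smul_eq_mul]; ring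
    rw [Finset.sum_congr rfl (fun i _ => h i), Finset.sum_add_distrib, ← Finset.mul_sum]
  -- the affine-in-y minorants
  set G : (Fin n → ℝ) → ℝ → ℝ :=
    fun x y => y * (∑ i, x i * lam i) + (∑ i, x i * b i) - (1/2)*(∑ i, (x i)^2) - y*τ - c
    with hGdef
  clear_value φ c G
  have hGle : ∀ (y : ℝ) (x : Fin n → ℝ), x ∈ coneC n → G x y ≤ φ y := by
    intro y x hx
    have h := proj_max hPc (y • lam + b) hx
    rw [hsum_d] at h
    simp only [hGdef, hφdef, phiFun]
    linarith
  have hGp : ∀ y : ℝ, G (Pc (y • lam + b)) y = φ y := by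
    intro y
    have ho := proj_orth hPc (y • lam + b)
    rw [hsum_d] at ho
    simp only [hGdef, hφdef, phiFun]
    linarith
  have hGeq : ∀ (y : ℝ) (x : Fin n → ℝ), x ∈ coneC n → G x y = φ y →
      x = Pc (y • lam + b) := by
    intro y x hx h
    apply proj_max_eq hPc (y • lam + b) hx
    have h2 := hGp y
    rw [hsum_d]
    simp only [hGdef, hφdef, phiFun] at h h2 ⊢
    linarith
  -- affine identity
  have haff : ∀ (x : Fin n → ℝ) (a bb y1 y2 : ℝ), a + bb = 1 →
      G x (a*y1 + bb*y2) = a * G x y1 + bb * G x y2 := by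
    intro x a bb y1 y2 hab
    simp only [hGdef]
    linear_combination (-(∑ i, x i * b i) + (1/2)*(∑ i, (x i)^2) + c) * hab
  -- convexity of φ
  have hconv : ConvexOn ℝ Set.univ φ := by
    refine ⟨convex_univ, ?_⟩
    intro y1 _ y2 _ a bb ha hb hab
    have hp := (hPc ((a*y1 + bb*y2) • lam + b)).1
    have h1 := hGle y1 _ hp
    have h2 := hGle y2 _ hp
    have hm := hGp (a*y1 + bb*y2)
    have haf := haff (Pc ((a*y1 + bb*y2) • lam + b)) a bb y1 y2 hab
    simp only [smul_eq_mul]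
    calc φ (a*y1 + bb*y2) = a * G (Pc ((a*y1 + bb*y2) • lam + b)) y1
          + bb * G (Pc ((a*y1 + bb*y2) • lam + b)) y2 := by rw [← hm, haf]
      _ ≤ a * φ y1 + bb * φ y2 := by
          apply add_le_add
          · exact mul_le_mul_of_nonneg_left h1 ha
          · exact mul_le_mul_of_nonneg_left h2 hb
  have hcont : Continuous φ := hconv.locallyLipschitz.continuous
  -- coercivity bounds
  have hSlam : 0 < ∑ i, (lam i)^2 := by
    obtain ⟨i, hi⟩ := Function.ne_iff.mp hlam
    have hi' : lam i ≠ 0 := by simpa using hi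
    have h1 : 0 < (lam i)^2 := pow_pos (lt_of_le_of_ne (hnonneg i) (Ne.symm hi')) 2
    calc (0:ℝ) < (lam i)^2 := h1
      _ ≤ ∑ j, (lam j)^2 :=
          Finset.single_le_sum (f := fun j => (lam j)^2) (fun j _ => sq_nonneg _)
            (Finset.mem_univ i)
  set S : ℝ := ∑ i, (lam i)^2 with hSdef
  set t : ℝ := (τ + 1) / S with ht
  have htpos : 0 ≤ t := by rw [ht]; exact div_nonneg (by linarith) hSlam.le
  clear_value S t
  have hlb1 : ∀ y : ℝ, -(y*τ) - c ≤ φ y := by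
    intro y
    have := hGle y 0 coneC_zero
    simp only [hGdef, Pi.zero_apply, zero_mul, Finset.sum_const_zero] at this
    simpa using this
  set K : ℝ := t * (∑ i, lam i * b i) - (1/2)*(t^2*S) - c with hK
  clear_value K
  have hlb2 : ∀ y : ℝ, y + K ≤ φ y := by
    intro y
    have hmem := coneC_smul htpos (⟨hmono, hnonneg⟩ : lam ∈ coneC n)
    have h := hGle y _ hmem
    have e1 : ∑ i, (t * lam i) * lam i = t * S := by
      rw [hSdef, Finset.mul_sum]; exact Finset.sum_congr rfl (fun i _ => by ring)
    have e2 : ∑ i, (t * lam i) * b i = t * (∑ i, lam i * b i) := by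
      rw [Finset.mul_sum]; exact Finset.sum_congr rfl (fun i _ => by ring)
    have e3 : ∑ i, (t * lam i)^2 = t^2 * S := by
      rw [hSdef, Finset.mul_sum]; exact Finset.sum_congr rfl (fun i _ => by ring)
    have etS : t * S = τ + 1 := by rw [ht]; field_simp
    simp only [hGdef] at h
    rw [e1, e2, e3, etS] at h
    rw [hK]
    linarith
  -- existence of a global minimizer
  set M : ℝ := φ 0 with hM
  set R : ℝ := max (|M - K| + 1) (|(M + c)/τ| + 1) with hR
  clear_value M R
  have hR1 : 0 < R := by
    rw [hR]
    exact lt_of_lt_of_le (by positivity) (le_max_left _ _)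
  have hout : ∀ y : ℝ, R < |y| → M < φ y := by
    intro y hy
    rcases le_or_gt 0 y with h0 | h0
    · rw [abs_of_nonneg h0] at hy
      have h1 : |M - K| + 1 ≤ R := by rw [hR]; exact le_max_left _ _
      have h2 : M - K ≤ |M - K| := le_abs_self _
      have := hlb2 y
      linarith
    · rw [abs_of_neg h0] at hy
      have h1 : |(M + c)/τ| + 1 ≤ R := by rw [hR]; exact le_max_right _ _
      have h2 : (M + c)/τ ≤ |(M + c)/τ| := le_abs_self _
      have h3 : ((M + c)/τ) * τ = M + c := div_mul_cancel₀ _ (ne_of_gt hτ)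
      have h4 : (M + c)/τ + 1 < -y := by linarith
      have h5 : ((M + c)/τ + 1) * τ ≤ (-y) * τ := by nlinarith
      have := hlb1 y
      nlinarith
  have hIcc : IsCompact (Set.Icc (-R) R) := isCompact_Icc
  have hne : (Set.Icc (-R) R).Nonempty := ⟨0, by constructor <;> linarith⟩
  obtain ⟨ystar, hystar_mem, hystar_min⟩ :=
    hIcc.exists_isMinOn hne hcont.continuousOn
  have hglobal : ∀ y : ℝ, φ ystar ≤ φ y := by
    intro y
    by_cases hy : y ∈ Set.Icc (-R) R
    · exact hystar_min hy
    · have : R < |y| := by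
        rcases abs_cases y with ⟨h1, h2⟩ | ⟨h1, h2⟩
        · rw [h1]; by_contra hcon; push_neg at hcon
          exact hy ⟨by linarith, by linarith⟩
        · rw [h1]; by_contra hcon; push_neg at hcon
          exact hy ⟨by linarith, by linarith⟩
      have h0mem : (0:ℝ) ∈ Set.Icc (-R) R := ⟨by linarith, by linarith⟩
      have := hout y this
      have := hystar_min h0mem
      calc φ ystar ≤ φ 0 := hystar_min h0mem
        _ = M := hM.symm
        _ ≤ φ y := le_of_lt (hout y ‹R < |y|›)
  -- uniqueness
  refine ⟨ystar, hglobal, ?_⟩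
  intro y1 h1
  -- show y1 = ystar given both are global minimizers
  have key : ∀ z1 z2 : ℝ, (∀ y, φ z1 ≤ φ y) → (∀ y, φ z2 ≤ φ y) → z1 = z2 := by
    intro z1 z2 hz1 hz2
    set zm : ℝ := (1/2)*z1 + (1/2)*z2 with hzm
    set pm : Fin n → ℝ := Pc (zm • lam + b) with hpm
    clear_value zm pm
    have hpmC : pm ∈ coneC n := by rw [hpm]; exact (hPc _).1
    have e1 : G pm z1 ≤ φ z1 := hGle z1 pm hpmC
    have e2 : G pm z2 ≤ φ z2 := hGle z2 pm hpmC
    have em : φ zm = G pm zm := by rw [hpm]; exact (hGp zm).symm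
    have haf : G pm zm = (1/2) * G pm z1 + (1/2) * G pm z2 := by
      rw [hzm]; exact haff pm (1/2) (1/2) z1 z2 (by norm_num)
    have heq12 : φ z1 = φ z2 := le_antisymm (hz1 z2) (hz2 z1)
    have hm1 : φ z1 ≤ φ zm := hz1 zm
    have hE1 : G pm z1 = φ z1 := by linarith
    have hE2 : G pm z2 = φ z2 := by linarith
    have hp1 : pm = Pc (z1 • lam + b) := hGeq z1 pm hpmC hE1
    have hp2 : pm = Pc (z2 • lam + b) := hGeq z2 pm hpmC hE2
    -- φ z1 = ½∑pm² − z1 τ − c  and likewise for z2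
    have f1 : φ z1 = (1/2) * (∑ i, (pm i)^2) - z1*τ - c := by
      rw [hφdef, hc]; simp only [phiFun]; rw [← hp1]
    have f2 : φ z2 = (1/2) * (∑ i, (pm i)^2) - z2*τ - c := by
      rw [hφdef, hc]; simp only [phiFun]; rw [← hp2]
    rw [f1, f2] at heq12
    have : z1 * τ = z2 * τ := by linarith
    exact mul_right_cancel₀ (ne_of_gt hτ) this
  exact key y1 ystar h1 hglobal
end

section
/- Let λ ∈ ℝ^n be nonzero with λ_1 ≥ λ_2 ≥ … ≥ λ_n ≥ 0, let τ > 0 and b ∈ ℝ^n. Suppose y ∈ ℝ satisfies ⟨Π_C(yλ + b), λ⟩ = τ, and set x* = Π_C(yλ + b). Then x* is the unique minimizer of ½‖x − b‖² over {x ∈ C : ⟨λ, x⟩ = τ}; that is, x* ∈ C, ⟨λ, x*⟩ = τ, and ‖x* − b‖ < ‖x − b‖ for every x ∈ C with ⟨λ, x⟩ = τ and x ≠ x*. -/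
open Matrix

/-- The Euclidean norm on `ℝⁿ`. -/
noncomputable def euclNorm {n : ℕ} (x : Fin n → ℝ) : ℝ :=
  Real.sqrt (∑ i, (x i)^2)

/-- if `⟨Π_C(yλ + b), λ⟩ = τ` then `x* = Π_C(yλ + b)` is the unique
minimizer of `½‖x − b‖²` over `{x ∈ C : ⟨λ, x⟩ = τ}`: it is feasible and strictly
closer to `b` than any other feasible point. -/
theorem stmt16 {n : ℕ} (hn : 0 < n) (lam : Fin n → ℝ)
    (hmono : ∀ i j : Fin n, i ≤ j → lam j ≤ lam i)
    (hnonneg : ∀ i, 0 ≤ lam i) (hlam : lam ≠ 0)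
    (τ : ℝ) (hτ : 0 < τ) (b : Fin n → ℝ)
    (Pc : (Fin n → ℝ) → Fin n → ℝ) (hPc : IsProjC Pc)
    (y : ℝ) (hy : ∑ i, lam i * Pc (y • lam + b) i = τ) :
    Pc (y • lam + b) ∈ coneC n ∧
    (∑ i, lam i * Pc (y • lam + b) i = τ) ∧
    ∀ x ∈ coneC n, ∑ i, lam i * x i = τ → x ≠ Pc (y • lam + b) →
      euclNorm (Pc (y • lam + b) - b) < euclNorm (x - b) := by
  classical
  set d := y • lam + b with hd
  set p := Pc d with hp
  obtain ⟨hpC, hmin⟩ := hPc d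
  refine ⟨hpC, hy, ?_⟩
  intro x hx hxτ hne
  have hdi : ∀ i, d i = y * lam i + b i := by
    intro i; simp [hd, Pi.add_apply, Pi.smul_apply, smul_eq_mul]
  set s := ∑ i, (x i - p i) ^ 2 with hs
  have hs0 : 0 < s := by
    have hex : ∃ i, x i ≠ p i := by
      by_contra h; push_neg at h; exact hne (funext h)
    obtain ⟨i, hi⟩ := hex
    have hi' : x i - p i ≠ 0 := sub_ne_zero.mpr hi
    refine Finset.sum_pos' (fun j _ => sq_nonneg _) ⟨i, Finset.mem_univ i, ?_⟩
    positivity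
  set c := ∑ i, (p i - d i) * (x i - p i) with hc
  have hkey : ∀ t : ℝ, 0 < t → t ≤ 1 → 0 ≤ c + t / 2 * s := by
    intro t ht ht1
    have hconv : (fun i => p i + t * (x i - p i)) ∈ coneC n := by
      obtain ⟨hpm, hpn⟩ := hpC
      obtain ⟨hxm, hxn⟩ := hx
      constructor
      · intro i j hij
        have h1 := hpm i j hij
        have h2 := hxm i j hij
        show p j + t * (x j - p j) ≤ p i + t * (x i - p i)
        nlinarith [ht.le, ht1]
      · intro i
        show 0 ≤ p i + t * (x i - p i)
        nlinarith [hpn i, hxn i, ht.le, ht1]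
    have hm := hmin _ hconv
    have hsum : ∑ i, ((fun i => p i + t * (x i - p i)) i - d i) ^ 2
        = ∑ i, ((p i - d i) ^ 2 + 2 * t * ((p i - d i) * (x i - p i))
            + t ^ 2 * (x i - p i) ^ 2) :=
      Finset.sum_congr rfl (fun i _ => by ring)
    rw [hsum, Finset.sum_add_distrib, Finset.sum_add_distrib,
      ← Finset.mul_sum, ← Finset.mul_sum, ← hc, ← hs] at hm
    have h2 : 0 ≤ 2 * c + t * s := by nlinarith
    nlinarith
  have hc0 : 0 ≤ c := by
    by_contra hcneg
    push_neg at hcneg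
    set t := min 1 (-c / s) with htdef
    have ht0 : 0 < t := lt_min one_pos (div_pos (by linarith) hs0)
    have ht1 : t ≤ 1 := min_le_left _ _
    have hts : t * s ≤ -c := (le_div_iff₀ hs0).mp (min_le_right _ _)
    have := hkey t ht0 ht1
    linarith
  have hdiff : ∑ i, (x i - b i) ^ 2
      = ∑ i, (p i - b i) ^ 2 + (s + 2 * c)
        + 2 * y * ((∑ i, lam i * x i) - ∑ i, lam i * p i) := by
    have hexp : ∑ i, (x i - b i) ^ 2
        = ∑ i, ((p i - b i) ^ 2 + ((x i - p i) ^ 2 + 2 * ((p i - d i) * (x i - p i)))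
            + 2 * y * (lam i * x i - lam i * p i)) := by
      refine Finset.sum_congr rfl (fun i _ => ?_)
      rw [hdi i]; ring
    rw [hexp, Finset.sum_add_distrib, Finset.sum_add_distrib, Finset.sum_add_distrib,
      ← Finset.mul_sum, ← Finset.mul_sum, ← hc, ← hs, Finset.sum_sub_distrib]
  have hlt : ∑ i, (p i - b i) ^ 2 < ∑ i, (x i - b i) ^ 2 := by
    rw [hdiff, hxτ, hy]
    linarith
  have h1 : ∑ i, ((p - b) i) ^ 2 = ∑ i, (p i - b i) ^ 2 := by
    simp [Pi.sub_apply]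
  have h2 : ∑ i, ((x - b) i) ^ 2 = ∑ i, (x i - b i) ^ 2 := by
    simp [Pi.sub_apply]
  have hnn : 0 ≤ ∑ i, ((p - b) i) ^ 2 := Finset.sum_nonneg (fun i _ => sq_nonneg _)
  unfold euclNorm
  exact Real.sqrt_lt_sqrt hnn (by rw [h1, h2]; exact hlt)
end
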